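/- Let K be a field and f₁, …, f_r ∈ K[x₁, …, x_m] polynomials such that the degree of each f_j in the variable x_i is at most δ_i for 1 ≤ i ≤ m. Let f : K^m → K^r be the map f = (f₁, …, f_r). If the K-span of f₁, …, f_r in K[x₁, …, x_m] has dimension at least δ, and #K ≥ 1 + max(δ₁, …, δ_m), then there exist points u₁, …, u_δ ∈ K^m such that f(u₁), …, f(u_δ) are linearly independent vectors in K^r. -/

import Mathlib

open MvPolynomial

lemma eval_inj_aux {K : Type*} [Field K] : ∀ {m : ℕ} (δi : Fin m → ℕ),
    (∀ i, ((δi i : Cardinal) + 1) ≤ Cardinal.mk K) →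
    ∀ (p : MvPolynomial (Fin m) K), (∀ i, p.degreeOf i ≤ δi i) →
    (∀ v : Fin m → K, eval v p = 0) → p = 0 := by
  intro m
  induction m with
  | zero =>
    intro δi _ p _ hev
    apply (MvPolynomial.isEmptyRingEquiv K (Fin 0)).injective
    rw [RingEquiv.map_zero]
    convert hev finZeroElim
    conv_rhs => rw [← (isEmptyRingEquiv K (Fin 0)).symm_apply_apply p]
    simp
  | succ n ih =>
    intro δi hc p hdeg hev
    apply (finSuccEquiv K n).injective
    simp only [map_zero]
    set q := finSuccEquiv K n p with hq
    have hmap : ∀ x : Fin n → K, q.map (eval x) = 0 := by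
      intro x
      apply Polynomial.eq_zero_of_forall_eval_zero_of_natDegree_lt_card
      · intro a
        rw [← eval_eq_eval_mv_eval']
        exact hev _
      · have h1 : (q.map (eval x)).natDegree ≤ q.natDegree :=
          Polynomial.natDegree_map_le
        have h2 : q.natDegree ≤ δi 0 := by
          rw [hq, natDegree_finSuccEquiv]; exact hdeg 0
        calc ((q.map (eval x)).natDegree : Cardinal) ≤ (δi 0 : Cardinal) := by
              exact_mod_cast h1.trans h2
          _ < (δi 0 : Cardinal) + 1 := by
              have : (δi 0 : Cardinal.{u_1}) < ((δi 0 + 1 : ℕ) : Cardinal.{u_1}) :=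
                Nat.cast_lt.mpr (Nat.lt_succ_self _)
              simpa [Nat.cast_add] using this
          _ ≤ Cardinal.mk K := hc 0
    have hcoeff : ∀ k : ℕ, q.coeff k = 0 := by
      intro k
      apply ih (fun j => δi j.succ) (fun j => hc j.succ)
      · intro j
        exact (degreeOf_coeff_finSuccEquiv p j k).trans (hdeg j.succ)
      · intro x
        have := congrArg (fun (h : Polynomial K) => h.coeff k) (hmap x)
        simpa [Polynomial.coeff_map] using this
    exact Polynomial.ext fun k => by simpa using hcoeff k

/-- If `f₁,…,f_r` are polynomials over `K` of degree at most `δᵢ` in each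
variable `xᵢ`, their span has dimension at least `δ`, and `#K ≥ 1 + max δᵢ`, then there
are `δ` points of `K^m` at which the value vectors `(f₁(u),…,f_r(u))` are linearly
independent in `K^r`. -/
theorem stmt_4 {K : Type*} [Field K] {r m δ : ℕ}
    (hr : 1 ≤ r) (hm : 1 ≤ m) (hδ : 1 ≤ δ)
    (δi : Fin m → ℕ) (f : Fin r → MvPolynomial (Fin m) K)
    (hdeg : ∀ j i, (f j).degreeOf i ≤ δi i)
    (hcard : ∀ i, ((δi i : Cardinal) + 1) ≤ Cardinal.mk K)
    (hspan : (δ : Cardinal) ≤ Module.rank K (Submodule.span K (Set.range f))) :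
    ∃ u : Fin δ → (Fin m → K),
      LinearIndependent K (fun t : Fin δ => (fun j : Fin r => MvPolynomial.eval (u t) (f j))) := by
  classical
  -- the evaluation linear map
  let E : MvPolynomial (Fin m) K →ₗ[K] ((Fin m → K) → K) :=
    { toFun := fun p v => eval v p
      map_add' := by intro p q; funext v; simp
      map_smul' := by intro c p; funext v; simp }
  set V := Submodule.span K (Set.range f) with hV
  -- degree bound on elements of V
  have hVdeg : ∀ p ∈ V, ∀ i, p.degreeOf i ≤ δi i := by
    intro p hp
    refine Submodule.span_induction ?_ ?_ ?_ ?_ hp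
    · rintro _ ⟨j, rfl⟩ i; exact hdeg j i
    · intro i; simp
    · intro a b _ _ ha hb i
      exact le_trans (degreeOf_add_le _ _ _) (max_le (ha i) (hb i))
    · intro c a _ ha i
      rw [smul_eq_C_mul]
      exact le_trans (degreeOf_C_mul_le _ _ _) (ha i)
  -- the restricted evaluation map is injective
  have hinj : Function.Injective (E.domRestrict V) := by
    rw [← LinearMap.ker_eq_bot, LinearMap.ker_eq_bot']
    rintro ⟨p, hp⟩ hz
    have hev : ∀ v : Fin m → K, eval v p = 0 := fun v =>
      congrFun (show (fun v => eval v p) = 0 from hz) v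
    exact Subtype.ext (eval_inj_aux δi hcard p (hVdeg p hp) hev)
  -- the value map G
  set G : (Fin m → K) → (Fin r → K) := fun v j => eval v (f j) with hG
  set W := Submodule.span K (Set.range G) with hW
  have hrange : LinearMap.range (E.domRestrict V) = Submodule.span K (Set.range (E ∘ f)) := by
    rw [LinearMap.range_domRestrict, hV, Submodule.map_span, ← Set.range_comp]
  have hδle : (δ : Cardinal) ≤ Module.rank K W := by
    have h1 : (δ : Cardinal) ≤ Module.rank K (Submodule.span K (Set.range (⇑E ∘ f))) := by
      rw [← hrange, rank_range_of_injective _ hinj]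
      exact hspan
    haveI : Module.Finite K W := Submodule.finiteDimensional_of_le le_top
    set n := Module.finrank K W with hn
    let b : Module.Basis (Fin n) K W := Module.finBasis K W
    let x : (Fin m → K) → W := fun v => ⟨G v, Submodule.subset_span ⟨v, rfl⟩⟩
    let a : Fin n → ((Fin m → K) → K) := fun k v => b.repr (x v) k
    have hcols : Set.range (⇑E ∘ f) ⊆ ↑(Submodule.span K (Set.range a)) := by
      rintro _ ⟨j, rfl⟩
      have hEf : (⇑E ∘ f) j = ∑ k, ((b k : Fin r → K) j) • a k := by
        funext v
        have hx : (x v : Fin r → K) = ∑ k, b.repr (x v) k • (b k : Fin r → K) := by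
          conv_lhs => rw [← b.sum_repr (x v)]
          push_cast
          rfl
        have h5 : G v j = ∑ k, b.repr (x v) k * (b k : Fin r → K) j := by
          have := congrFun hx j
          simpa using this
        simpa [a, E, hG, mul_comm] using h5
      rw [hEf]
      exact Submodule.sum_mem _ fun k _ =>
        Submodule.smul_mem _ _ (Submodule.subset_span ⟨k, rfl⟩)
    have h2 : Module.rank K (Submodule.span K (Set.range (⇑E ∘ f)))
        ≤ Module.rank K (Submodule.span K (Set.range a)) := by
      apply Submodule.rank_mono
      rw [Submodule.span_le]
      exact hcols
    have h3 : Module.rank K (Submodule.span K (Set.range a)) ≤ (n : Cardinal) :=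
      (rank_span_le _).trans (by simpa using Cardinal.mk_range_le_lift (f := a))
    have h4 : (n : Cardinal) = Module.rank K W := Module.finrank_eq_rank K W
    exact h1.trans (h2.trans (h3.trans_eq h4))
  -- select δ linearly independent vectors among the values G v
  obtain ⟨s, hsub, hspan_eq, hli⟩ := exists_linearIndependent K (Set.range G)
  have hcard_s : (δ : Cardinal) ≤ Cardinal.mk s := by
    rw [← rank_span_set hli, hspan_eq]
    exact hδle
  obtain ⟨e⟩ : Nonempty (Fin δ ↪ s) :=
    Cardinal.lift_mk_le'.mp (by simpa using hcard_s)
  have hchoice : ∀ t : Fin δ, ∃ v : Fin m → K, G v = (e t : Fin r → K) := fun t => hsub (e t).2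
  choose u hu using hchoice
  refine ⟨u, ?_⟩
  have heq : (fun t : Fin δ => (fun j : Fin r => MvPolynomial.eval (u t) (f j)))
      = fun t => ((e t : s) : Fin r → K) := by
    funext t
    exact hu t
  rw [heq]
  exact hli.comp e e.injective
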